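/- The principle W_κ(κ) is equivalent to 2^{<κ} = κ: there exist a κ-tree T, a set B of κ many cofinal branches of T, and a sequence ⟨W_α : α < κ⟩ with each W_α ⊆ 𝒫(T_α) of size < κ, such that for every z ⊆ B of size < κ there is α < κ with π_β[z] ∈ W_β for all β ≥ α, if and only if 2^{<κ} = κ. -/

import Mathlib

open Cardinal Set
open scoped Classical

universe u v

namespace ForestPaper

variable {X : Type u} {μ : Type v}

/-- The domain of a partial function represented as an `Option`-valued function. -/
def pdom (f : X → Option μ) : Set X := {x | f x ≠ none}

/-- The range of a partial function. -/
def pran (f : X → Option μ) : Set μ := {y | ∃ x, f x = some y}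

/-- `Ext g f` means the partial function `g` extends `f`. -/
def Ext (g f : X → Option μ) : Prop := ∀ x, f x ≠ none → g x = f x

/-- Restriction of a partial function to a set. -/
noncomputable def pres (f : X → Option μ) (z : Set X) : X → Option μ :=
  fun x => if x ∈ z then f x else none

/-- The set of points of the common domain where `f` and `g` disagree. -/
def pdiff (f g : X → Option μ) : Set X :=
  {x | f x ≠ none ∧ g x ≠ none ∧ f x ≠ g x}

/-- `f` and `g` agree on their common domain. -/
def Agree (f g : X → Option μ) : Prop :=
  ∀ x, f x ≠ none → g x ≠ none → f x = g x

/-- Two members of `F` are compatible if they have a common extension in `F`. -/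
def Compat (F : Set (X → Option μ)) (f g : X → Option μ) : Prop :=
  ∃ h ∈ F, Ext h f ∧ Ext h g

/-- `A` is an antichain in `F`: a pairwise incompatible subset of `F`. -/
def IsAntichainIn (F A : Set (X → Option μ)) : Prop :=
  A ⊆ F ∧ ∀ f ∈ A, ∀ g ∈ A, f ≠ g → ¬ Compat F f g

/-- `A` is a maximal antichain in `F`. -/
def IsMaxAntichainIn (F A : Set (X → Option μ)) : Prop :=
  IsAntichainIn F A ∧ ∀ f ∈ F, ∃ g ∈ A, Compat F f g

/-- A `(c, X, μ)`-forest: a collection of partial functions from `X` to `μ` whose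
domains are exactly the subsets of `X` of size `< c`, with coherent restrictions
between levels (every restriction of a member is a member, and every member
extends to any larger admissible domain). -/
structure IsForest (c : Cardinal.{u}) (F : Set (X → Option μ)) : Prop where
  dom_small : ∀ f ∈ F, #(pdom f) < c
  exists_dom : ∀ z : Set X, #z < c → ∃ f ∈ F, pdom f = z
  restrict_mem : ∀ f ∈ F, ∀ z : Set X, z ⊆ pdom f → pres f z ∈ F
  extend_mem : ∀ f ∈ F, ∀ z : Set X, #z < c → pdom f ⊆ z →
    ∃ g ∈ F, pdom g = z ∧ Ext g f

/-- A family is `κ`-coherent when any two members disagree at `< κ` many points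
of their common domain. -/
def Coherent (κ : Cardinal.{u}) (F : Set (X → Option μ)) : Prop :=
  ∀ f ∈ F, ∀ g ∈ F, #(pdiff f g) < κ

/-- `F` is closed under modifications at `< κ` many points. -/
def ClosedMod (κ : Cardinal.{u}) (F : Set (X → Option μ)) : Prop :=
  ∀ f ∈ F, ∀ f' : X → Option μ, pdom f' = pdom f →
    #{x | f x ≠ f' x} < κ → f' ∈ F

/-- A partial function is injective (on its domain). -/
def PInj (f : X → Option μ) : Prop :=
  ∀ x y, f x ≠ none → f x = f y → x = y

/-- A partial function is `< κ`-to-1: every fiber has size `< κ`. -/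
def SmallTo1 (κ : Cardinal.{u}) (f : X → Option μ) : Prop :=
  ∀ y : μ, #{x | f x = some y} < κ

/-- `F` contains a `⊆`-well-ordered chain of order type `o`. -/
def HasChain (o : Ordinal.{u}) (F : Set (X → Option μ)) : Prop :=
  ∃ c : o.ToType → (X → Option μ), (∀ i, c i ∈ F) ∧
    ∀ i j, i < j → Ext (c j) (c i) ∧ c i ≠ c j

/-- A `κ`-tree presented as an inverse system of levels indexed by the ordinals
below `κ`, with projection maps, all levels of size `< κ`. -/
structure TreeSystem (κ : Cardinal.{u}) where
  Lev : κ.ord.ToType → Type u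
  proj : ∀ {α β : κ.ord.ToType}, β ≤ α → Lev α → Lev β
  proj_refl : ∀ (α : κ.ord.ToType) (x : Lev α), proj le_rfl x = x
  proj_comp : ∀ {α β γ : κ.ord.ToType} (h1 : γ ≤ β) (h2 : β ≤ α) (x : Lev α),
    proj h1 (proj h2 x) = proj (h1.trans h2) x
  small : ∀ α, #(Lev α) < κ

/-- A cofinal branch of a tree system: a coherent choice of a node at each level. -/
def Branch {κ : Cardinal.{u}} (T : TreeSystem κ) : Type u :=
  {b : ∀ α, T.Lev α // ∀ (α β : κ.ord.ToType) (h : β ≤ α), T.proj h (b α) = b β}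

/-- The principle `W_κ(λ)`: there are a `κ`-tree `T`, a set `B` of `λ` many
cofinal branches, and small families `W_α ⊆ 𝒫(T_α)` such that every subset of
`B` of size `< κ` has its level-`β` projections in `W_β` for all sufficiently
large `β`. -/
def WPrinciple (κ lam : Cardinal.{u}) : Prop :=
  ∃ (T : TreeSystem κ) (B : Set (Branch T))
    (W : ∀ α : κ.ord.ToType, Set (Set (T.Lev α))),
    #B = lam ∧ (∀ α, #(W α) < κ) ∧
    ∀ z : Set (Branch T), z ⊆ B → #z < κ →
      ∃ α, ∀ β, α ≤ β → {n : T.Lev β | ∃ b ∈ z, b.1 β = n} ∈ W β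


/-- The tree whose level `α` consists of the ordinals `≤ α`, with projections
given by `min`. -/
noncomputable def ordTree (κ : Cardinal.{u}) (hκ : ℵ₀ ≤ κ) : TreeSystem κ where
  Lev α := ↥(Set.Iic α)
  proj {α β} h x := ⟨min x.1 β, Set.mem_Iic.mpr (min_le_right _ _)⟩
  proj_refl α x := Subtype.ext (min_eq_left x.2)
  proj_comp {α β γ} h1 h2 x := Subtype.ext (by
    show min (min x.1 β) γ = min x.1 γ
    rw [min_assoc, min_eq_right h1])
  small α := by
    show #(↥(Set.Iic α)) < κ
    have h1 : #(Set.Iio α) < κ := Cardinal.mk_Iio_ord_toType α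
    have h2 : (Set.Iic α) = insert α (Set.Iio α) := Set.Iio_insert.symm
    rw [h2]
    exact lt_of_le_of_lt Cardinal.mk_insert_le
      (Cardinal.add_lt_of_lt hκ h1 (Cardinal.one_lt_aleph0.trans_le hκ))

/-- The cofinal branch of `ordTree κ` determined by an ordinal `γ < κ`. -/
noncomputable def ordBranch (κ : Cardinal.{u}) (hκ : ℵ₀ ≤ κ) (γ : κ.ord.ToType) :
    Branch (ordTree κ hκ) :=
  ⟨fun β => ⟨min γ β, Set.mem_Iic.mpr (min_le_right _ _)⟩, fun α β h => Subtype.ext (by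
    show min (min γ α) β = min γ β
    rw [min_assoc, min_eq_right h])⟩

theorem wprinciple_of_powerlt (κ : Cardinal.{u}) (hκ : κ.IsRegular)
    (h2 : (2 : Cardinal.{u}) ^< κ = κ) : WPrinciple κ κ := by
  classical
  have hκ0 := hκ.aleph0_le
  have hO : #(κ.ord.ToType) = κ := Cardinal.mk_ord_toType κ
  haveI hne : Nonempty κ.ord.ToType := by
    rw [← Cardinal.mk_ne_zero_iff, hO]; exact hκ.pos.ne'
  haveI := Cardinal.noMaxOrder hκ0
  have hbinj : Function.Injective (ordBranch κ hκ0) := by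
    intro γ γ' h
    have h1 : (ordBranch κ hκ0 γ).1 (max γ γ') = (ordBranch κ hκ0 γ').1 (max γ γ') := by
      rw [h]
    have h3 : min γ (max γ γ') = min γ' (max γ γ') := congrArg Subtype.val h1
    rwa [min_eq_left (le_max_left _ _), min_eq_left (le_max_right _ _)] at h3
  -- an enumeration of the small subsets of `κ.ord.ToType`
  have hQ : #(Σ α : κ.ord.ToType, Set (Set.Iio α)) ≤ κ := by
    rw [Cardinal.mk_sigma]
    calc Cardinal.sum (fun α : κ.ord.ToType => #(Set (Set.Iio α)))
        ≤ Cardinal.sum (fun _ : κ.ord.ToType => κ) := by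
          refine Cardinal.sum_le_sum _ _ fun α => ?_
          rw [Cardinal.mk_set]
          calc (2 : Cardinal) ^ #(Set.Iio α) ≤ 2 ^< κ :=
                Cardinal.le_powerlt 2 (Cardinal.mk_Iio_ord_toType α)
            _ = κ := h2
      _ = κ := by rw [Cardinal.sum_const', hO, Cardinal.mul_eq_self hκ0]
  haveI hQne : Nonempty (Σ α : κ.ord.ToType, Set (Set.Iio α)) :=
    ⟨⟨Classical.arbitrary _, ∅⟩⟩
  obtain ⟨j⟩ : Nonempty ((Σ α : κ.ord.ToType, Set (Set.Iio α)) ↪ κ.ord.ToType) :=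
    (Cardinal.le_def _ _).mp (hQ.trans hO.ge)
  let dec : (Σ α : κ.ord.ToType, Set (Set.Iio α)) → Set κ.ord.ToType :=
    fun p => Subtype.val '' p.2
  let e : κ.ord.ToType → Set κ.ord.ToType := fun ξ => dec (Function.invFun j ξ)
  have He : ∀ S : Set κ.ord.ToType, ∀ α, (∀ y ∈ S, y < α) → ∃ ξ, e ξ = S := by
    intro S α hb
    refine ⟨j ⟨α, {x | x.1 ∈ S}⟩, ?_⟩
    have hj : Function.invFun j (j ⟨α, {x | x.1 ∈ S}⟩) = ⟨α, {x | x.1 ∈ S}⟩ :=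
      Function.leftInverse_invFun j.injective _
    show dec (Function.invFun j (j ⟨α, {x | x.1 ∈ S}⟩)) = S
    rw [hj]
    ext y
    constructor
    · rintro ⟨⟨y', hy'⟩, hmem, rfl⟩; exact hmem
    · intro hy; exact ⟨⟨y, hb y hy⟩, hy, rfl⟩
  -- the witnessing tree, branches and families `W β`
  refine ⟨ordTree κ hκ0, Set.range (ordBranch κ hκ0),
    fun β => (fun ξ => {n : (ordTree κ hκ0).Lev β | n.1 ∈ e ξ}) '' (Set.Iio β), ?_, ?_, ?_⟩
  · rw [Cardinal.mk_range_eq _ hbinj, hO]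
  · intro β
    exact lt_of_le_of_lt Cardinal.mk_image_le (Cardinal.mk_Iio_ord_toType β)
  · intro z hzB hzκ
    set S := (ordBranch κ hκ0) ⁻¹' z with hS
    have hScard : #S < κ := by
      rw [hS, Cardinal.mk_preimage_of_injective_of_subset_range _ z hbinj hzB]
      exact hzκ
    obtain ⟨α₀, hα₀⟩ : ∃ a, ∀ y ∈ S, y < a :=
      by
        have hnc : ¬ IsCofinal _ := fun h => (lt_irrefl _) ((Order.cof_le h).trans_lt
          (by rwa [Ordinal.cof_toType, hκ.cof_ord] : #_ < Order.cof κ.ord.ToType))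
        simp only [IsCofinal, not_forall, not_exists, not_and, not_le] at hnc
        exact hnc
    obtain ⟨ξ, hξ⟩ := He S α₀ hα₀
    obtain ⟨α, hα⟩ := exists_gt (max ξ α₀)
    refine ⟨α, fun β hβ => ?_⟩
    have hξβ : ξ < β := lt_of_le_of_lt (le_max_left _ _) (hα.trans_le hβ)
    have hα₀β : α₀ ≤ β := ((le_max_right ξ α₀).trans_lt (hα.trans_le hβ)).le
    refine ⟨ξ, hξβ, ?_⟩
    show {n : (ordTree κ hκ0).Lev β | n.1 ∈ e ξ} = {n | ∃ b ∈ z, b.1 β = n}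
    rw [hξ]
    ext n
    simp only [Set.mem_setOf_eq]
    constructor
    · intro hn
      exact ⟨ordBranch κ hκ0 n.1, hn, Subtype.ext (min_eq_left n.2)⟩
    · rintro ⟨b, hbz, rfl⟩
      obtain ⟨γ, rfl⟩ := hzB hbz
      have hγ : γ ∈ S := hbz
      have hγβ : γ ≤ β := ((hα₀ γ hγ).trans_le hα₀β).le
      show min γ β ∈ S
      rwa [min_eq_left hγβ]

theorem powerlt_of_wprinciple (κ : Cardinal.{u}) (hκ : κ.IsRegular)
    (hw : WPrinciple κ κ) : (2 : Cardinal.{u}) ^< κ = κ := by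
  classical
  obtain ⟨T, B, W, hB, hWs, hcap⟩ := hw
  haveI hne : Nonempty κ.ord.ToType := by
    rw [← Cardinal.mk_ne_zero_iff, Cardinal.mk_ord_toType]; exact hκ.pos.ne'
  refine le_antisymm ?_ ?_
  · rw [Cardinal.powerlt_le]
    intro c hc
    have hcB : c ≤ #B := by rw [hB]; exact hc.le
    obtain ⟨A, hAB, hA⟩ := Cardinal.le_mk_iff_exists_subset.mp hcB
    -- separation levels
    let d : Branch T → Branch T → κ.ord.ToType := fun b b' =>
      if h : ∃ α, b.1 α ≠ b'.1 α then h.choose else Classical.arbitrary _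
    have hd : ∀ b b' : Branch T, b ≠ b' → b.1 (d b b') ≠ b'.1 (d b b') := by
      intro b b' hbb'
      have h : ∃ α, b.1 α ≠ b'.1 α := by
        by_contra hcon; push_neg at hcon
        exact hbb' (Subtype.ext (funext hcon))
      have hEq : d b b' = h.choose := by simp only [d]; exact dif_pos h
      rw [hEq]; exact h.choose_spec
    let sep : ↥A × ↥A → κ.ord.ToType := fun p => d p.1.1 p.2.1
    have hS₀ : #(Set.range sep) < κ := by
      refine lt_of_le_of_lt Cardinal.mk_range_le ?_
      have hp : #(↥A × ↥A) = #↥A * #↥A := by simp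
      rw [hp, hA]
      exact Cardinal.mul_lt_of_lt hκ.aleph0_le hc hc
    obtain ⟨αs, hαs⟩ : ∃ a, ∀ y ∈ Set.range sep, y < a :=
      by
        have hnc : ¬ IsCofinal _ := fun h => (lt_irrefl _) ((Order.cof_le h).trans_lt
          (by rwa [Ordinal.cof_toType, hκ.cof_ord] : #_ < Order.cof κ.ord.ToType))
        simp only [IsCofinal, not_forall, not_exists, not_and, not_le] at hnc
        exact hnc
    have hinj : ∀ β, αs ≤ β → ∀ b ∈ A, ∀ b' ∈ A, b.1 β = b'.1 β → b = b' := by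
      intro β hβ b hb b' hb' heq
      by_contra hne'
      have h1 := hd b b' hne'
      have h2 : d b b' < αs := hαs _ ⟨(⟨b, hb⟩, ⟨b', hb'⟩), rfl⟩
      have h3 : d b b' ≤ β := (h2.trans_le hβ).le
      have h4 := congrArg (T.proj h3) heq
      rw [b.2 β _ h3, b'.2 β _ h3] at h4
      exact h1 h4
    -- capturing levels
    have hz : ∀ s : Set ↥A, Subtype.val '' s ⊆ B ∧ #(Subtype.val '' s) < κ := by
      intro s
      constructor
      · rintro x ⟨y, _, rfl⟩; exact hAB y.2
      · refine lt_of_le_of_lt Cardinal.mk_image_le ?_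
        refine lt_of_le_of_lt (Cardinal.mk_set_le s) ?_
        rw [hA]; exact hc
    let cap : Set ↥A → κ.ord.ToType := fun s => (hcap _ (hz s).1 (hz s).2).choose
    have hcapspec : ∀ s : Set ↥A, ∀ β, cap s ≤ β →
        {n : T.Lev β | ∃ b ∈ Subtype.val '' s, b.1 β = n} ∈ W β :=
      fun s => (hcap _ (hz s).1 (hz s).2).choose_spec
    let Φ : Set ↥A → Σ β : κ.ord.ToType, ↥(W β) := fun s =>
      ⟨max αs (cap s), ⟨_, hcapspec s _ (le_max_right _ _)⟩⟩
    have hrec : ∀ s : Set ↥A, ∀ β, αs ≤ β →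
        s = {x : ↥A | x.1.1 β ∈ {n : T.Lev β | ∃ b ∈ Subtype.val '' s, b.1 β = n}} := by
      intro s β hβ
      ext x
      simp only [Set.mem_setOf_eq]
      constructor
      · intro hx; exact ⟨x.1, ⟨x, hx, rfl⟩, rfl⟩
      · rintro ⟨b, hb, heq⟩
        obtain ⟨y, hy, rfl⟩ := hb
        have hyx : (y : Branch T) = (x : Branch T) := hinj β hβ _ y.2 _ x.2 heq
        exact Subtype.ext hyx ▸ hy
    have hΦinj : Function.Injective Φ := by
      let recon : (Σ β : κ.ord.ToType, ↥(W β)) → Set ↥A :=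
        fun p => {x : ↥A | x.1.1 p.1 ∈ (p.2 : Set (T.Lev p.1))}
      have key : ∀ s, recon (Φ s) = s := fun s =>
        (hrec s (max αs (cap s)) (le_max_left _ _)).symm
      intro s s' h
      rw [← key s, ← key s', h]
    have hcard : (2 : Cardinal) ^ c ≤ #(Σ β : κ.ord.ToType, ↥(W β)) := by
      rw [← hA, ← Cardinal.mk_set]
      exact Cardinal.mk_le_of_injective hΦinj
    refine hcard.trans ?_
    rw [Cardinal.mk_sigma]
    calc Cardinal.sum (fun β : κ.ord.ToType => #(W β))
        ≤ Cardinal.sum (fun _ : κ.ord.ToType => κ) :=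
          Cardinal.sum_le_sum _ _ fun β => (hWs β).le
      _ = κ := by
        rw [Cardinal.sum_const', Cardinal.mk_ord_toType, Cardinal.mul_eq_self hκ.aleph0_le]
  · by_contra hlt
    push_neg at hlt
    have h1 : (2 : Cardinal) ^< κ < (2 : Cardinal) ^ ((2 : Cardinal) ^< κ) :=
      Cardinal.cantor _
    have h2 : (2 : Cardinal) ^ ((2 : Cardinal) ^< κ) ≤ (2 : Cardinal) ^< κ :=
      Cardinal.le_powerlt 2 hlt
    exact absurd (h1.trans_le h2) (lt_irrefl _)

/-- For regular uncountable `κ`, the principle `W_κ(κ)` is equivalent to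
`2^{<κ} = κ`. -/
theorem stmt17 (κ : Cardinal.{u}) (hκ : κ.IsRegular) (huncount : ℵ₀ < κ) :
    WPrinciple κ κ ↔ (2 : Cardinal.{u}) ^< κ = κ := by
  exact ⟨powerlt_of_wprinciple κ hκ, wprinciple_of_powerlt κ hκ⟩
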